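/- arXiv:2212.00395 — 3 statements merged into one kernel-verified Lean document; each statement's English description precedes it below -/
import Mathlib

section
/- Let I ⊆ K[x_1,…,x_n] be a polymatroidal ideal generated in degree 2. Let u_1,…,u_m be the squarefree elements of G(I), listed so that u_1,…,u_m is an admissible order of the ideal J = (u_1,…,u_m), and let x_{ℓ_1}², …, x_{ℓ_t}² be the non-squarefree elements of G(I), listed in any order. Then u_1,…,u_m, x_{ℓ_1}², …, x_{ℓ_t}² is an admissible order of I; in particular, I has linear quotients. -/
open MvPolynomial

/-- An ideal of `K[x_1,…,x_n]` is *generated by variables* if it is the span of the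
image of a subset of the variables. -/
def genByVars {K : Type*} [Field K] {n : ℕ} (I : Ideal (MvPolynomial (Fin n) K)) : Prop :=
  ∃ T : Set (Fin n), I = Ideal.span (MvPolynomial.X '' T)
/-- A polynomial is a monomial (with coefficient `1`). -/
def IsMonomialElt {K : Type*} [Field K] {n : ℕ} (p : MvPolynomial (Fin n) K) : Prop :=
  ∃ a : Fin n →₀ ℕ, p = MvPolynomial.monomial a 1
/-- A monomial ideal has *linear quotients* if its minimal monomial generators admit an
ordering `u 0, u 1, …` such that each colon ideal `(u_0,…,u_{i-1}) : u_i` is generated by a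
subset of the variables.  (The conditions that the `u i` are monomials, pairwise
non-dividing, and generate `I` say exactly that they are the minimal monomial generators
of `I`.) -/
def HasLinearQuotients {K : Type*} [Field K] {n : ℕ}
    (I : Ideal (MvPolynomial (Fin n) K)) : Prop :=
  ∃ (m : ℕ) (u : Fin m → MvPolynomial (Fin n) K),
    (∀ i, IsMonomialElt (u i)) ∧
    (∀ i j, i ≠ j → ¬ u i ∣ u j) ∧
    Ideal.span (Set.range u) = I ∧
    ∀ i : Fin m,
      genByVars ((Ideal.span (u '' {j | j < i})).colon (Ideal.span {u i}))
/-- The polymatroidal exchange property for a set `Gens` of monomials (the minimal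
monomial generators of an equigenerated monomial ideal): for all `u, v ∈ Gens` and every
`i` with `deg_{x_i}(u) > deg_{x_i}(v)` there is `j` with `deg_{x_j}(u) < deg_{x_j}(v)`
such that `x_j · (u / x_i) ∈ Gens` (equivalently, `x_i · w = x_j · u` for some
`w ∈ Gens`). -/
def ExchangeProperty {K : Type*} [Field K] {n : ℕ}
    (Gens : Set (MvPolynomial (Fin n) K)) : Prop :=
  ∀ u ∈ Gens, ∀ v ∈ Gens, ∀ i : Fin n,
    MvPolynomial.degreeOf i v < MvPolynomial.degreeOf i u →
      ∃ j : Fin n, MvPolynomial.degreeOf j u < MvPolynomial.degreeOf j v ∧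
        ∃ w ∈ Gens, MvPolynomial.X i * w = MvPolynomial.X j * u
set_option maxHeartbeats 1000000
lemma degOf_mono_one {K : Type*} [Field K] {n : ℕ} (s : Fin n →₀ ℕ) (j : Fin n) :
    degreeOf j (monomial s (1:K)) = s j := by
  classical
  rw [degreeOf_eq_sup, support_monomial, if_neg one_ne_zero, Finset.sup_singleton]

lemma XX_eq_mono {K : Type*} [Field K] {n : ℕ} (p q : Fin n) :
    (X p * X q : MvPolynomial (Fin n) K)
      = monomial (Finsupp.single p 1 + Finsupp.single q 1) 1 := by
  rw [X, X, monomial_mul, one_mul]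

lemma Xsq_eq_mono {K : Type*} [Field K] {n : ℕ} (j : Fin n) :
    (X j ^ 2 : MvPolynomial (Fin n) K) = monomial (Finsupp.single j 2) 1 :=
  X_pow_eq_monomial

lemma XX_ne_sq {K : Type*} [Field K] {n : ℕ} {p q j : Fin n} (hpq : p ≠ q) :
    (X p * X q : MvPolynomial (Fin n) K) ≠ X j ^ 2 := by
  rw [XX_eq_mono, Xsq_eq_mono]
  intro h
  have h2 := DFunLike.congr_fun (monomial_left_injective (one_ne_zero) h) p
  simp [Finsupp.single_apply, hpq.symm] at h2
  split_ifs at h2 <;> omega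

lemma finsupp_eq_of_le_sum {n : ℕ} {x y : Fin n →₀ ℕ}
    (h : x ≤ y) (hs : ∑ j, x j = ∑ j, y j) : x = y := by
  ext j
  exact (Finset.sum_eq_sum_iff_of_le (fun i _ => Finsupp.le_def.mp h i)).mp hs j
    (Finset.mem_univ j)

/-- **Step in the proof of Theorem 4.6 (Ficarra–Herzog).**  Let `I` be a polymatroidal
ideal generated in degree `2`, with squarefree minimal generators `u 0, …, u (m-1)`
listed in an admissible order of the squarefree part `J = (u_0,…,u_{m-1})`, and
non-squarefree minimal generators `x_{ℓ 0}², …, x_{ℓ (t-1)}²` listed in any order.  Then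
`u_0, …, u_{m-1}, x_{ℓ 0}², …, x_{ℓ (t-1)}²` is an admissible order of `I`; in
particular `I` has linear quotients. -/
theorem admissible_order_of_polymatroidal_degree_two
    {K : Type*} [Field K] {n m t : ℕ}
    (u : Fin m → MvPolynomial (Fin n) K) (l : Fin t → Fin n)
    (hu : ∀ i, ∃ a b : Fin n, a ≠ b ∧ u i = MvPolynomial.X a * MvPolynomial.X b)
    (huinj : Function.Injective u)
    (hlinj : Function.Injective l)
    (hpoly : ExchangeProperty
      (Set.range u ∪ Set.range (fun a : Fin t => MvPolynomial.X (l a) ^ 2)))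
    (hadm : ∀ i : Fin m,
      genByVars ((Ideal.span (u '' {j | j < i})).colon (Ideal.span {u i}))) :
    (∀ a : Fin t,
      genByVars ((Ideal.span (Set.range u ∪
          (fun b : Fin t => MvPolynomial.X (l b) ^ 2) '' {b | b < a})).colon
        (Ideal.span {(MvPolynomial.X (l a) ^ 2 : MvPolynomial (Fin n) K)}))) ∧
    HasLinearQuotients (Ideal.span
      (Set.range u ∪ Set.range (fun a : Fin t => MvPolynomial.X (l a) ^ 2))) := by
  classical
  choose va vb hvab hueq using hu
  have hud : ∀ k, u k = monomial (Finsupp.single (va k) 1 + Finsupp.single (vb k) 1) (1:K) :=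
    fun k => by rw [hueq k, XX_eq_mono]
  -- generator exponent sets
  have hgen : ∀ c : Fin t,
      (Set.range u ∪ (fun b' : Fin t => (X (l b') : MvPolynomial (Fin n) K) ^ 2) '' {b' | b' < c})
        = (fun s => monomial s (1:K)) ''
          (Set.range (fun k => Finsupp.single (va k) 1 + Finsupp.single (vb k) 1) ∪
            (fun b' : Fin t => Finsupp.single (l b') 2) '' {b' | b' < c}) := by
    intro c
    rw [Set.image_union, ← Set.range_comp, ← Set.image_comp]
    congr 1
    · exact congrArg Set.range (funext fun k => hud k)
    · exact congrArg (· '' {b' | b' < c}) (funext fun b' => Xsq_eq_mono (l b'))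
  have hmem : ∀ (c : Fin t) (q : MvPolynomial (Fin n) K),
      q ∈ Ideal.span (Set.range u ∪
          (fun b' : Fin t => (X (l b') : MvPolynomial (Fin n) K) ^ 2) '' {b' | b' < c}) ↔
        ∀ xi ∈ q.support,
          ∃ si ∈ (Set.range (fun k => Finsupp.single (va k) 1 + Finsupp.single (vb k) 1) ∪
            (fun b' : Fin t => Finsupp.single (l b') 2) '' {b' | b' < c}), si ≤ xi := by
    intro c q
    rw [hgen c]
    exact mem_ideal_span_monomial_image
  have part1 : ∀ a0 : Fin t,
      genByVars ((Ideal.span (Set.range u ∪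
          (fun b : Fin t => MvPolynomial.X (l b) ^ 2) '' {b | b < a0})).colon
        (Ideal.span {(MvPolynomial.X (l a0) ^ 2 : MvPolynomial (Fin n) K)})) := by
    intro a0
    refine ⟨{j | X j * X (l a0) ^ 2 ∈ Ideal.span (Set.range u ∪
        (fun b : Fin t => (X (l b) : MvPolynomial (Fin n) K) ^ 2) '' {b | b < a0})}, ?_⟩
    apply le_antisymm
    · intro p hp
      rw [Ideal.mem_colon_span_singleton] at hp
      rw [mem_ideal_span_X_image]
      intro mm hmm
      have hsupp : mm + Finsupp.single (l a0) 2 ∈ (p * X (l a0) ^ 2).support := by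
        rw [Xsq_eq_mono, mem_support_iff, coeff_mul_monomial, mul_one]
        exact mem_support_iff.mp hmm
      obtain ⟨si, hsi, hle⟩ := (hmem a0 _).mp hp _ hsupp
      rcases hsi with ⟨k, rfl⟩ | ⟨c, hc, rfl⟩
      · -- si comes from a squarefree generator u k
        by_cases hva : va k = l a0
        · -- u k = X (l a0) * X (vb k)
          have hvbne : vb k ≠ l a0 := fun h => hvab k (hva.trans h.symm)
          refine ⟨vb k, ?_, ?_⟩
          · simp only [Set.mem_setOf_eq]
            have he : X (vb k) * X (l a0) ^ 2 = X (l a0) * u k := by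
              rw [hueq k, hva]; ring
            rw [he]
            exact Ideal.mul_mem_left _ _ (Ideal.subset_span (Or.inl ⟨k, rfl⟩))
          · have h1 := Finsupp.le_def.mp hle (vb k)
            simp only [Finsupp.add_apply, Finsupp.single_eq_same,
              Finsupp.single_eq_of_ne hvbne] at h1
            omega
        · by_cases hvb : vb k = l a0
          · have hvane : va k ≠ l a0 := hva
            refine ⟨va k, ?_, ?_⟩
            · simp only [Set.mem_setOf_eq]
              have he : X (va k) * X (l a0) ^ 2 = X (l a0) * u k := by
                rw [hueq k, hvb]; ring
              rw [he]
              exact Ideal.mul_mem_left _ _ (Ideal.subset_span (Or.inl ⟨k, rfl⟩))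
            · have h1 := Finsupp.le_def.mp hle (va k)
              simp only [Finsupp.add_apply, Finsupp.single_eq_same,
                Finsupp.single_eq_of_ne hvane] at h1
              omega
          · -- exchange case
            obtain ⟨j, hj, w, hw, hwe⟩ := hpoly (X (l a0) ^ 2) (Or.inr ⟨a0, rfl⟩)
              (u k) (Or.inl ⟨k, rfl⟩) (l a0) (by
                rw [hud k, Xsq_eq_mono, degOf_mono_one, degOf_mono_one]
                simp [Finsupp.single_apply, hva, hvb])
            rw [hud k, Xsq_eq_mono, degOf_mono_one, degOf_mono_one] at hj
            have hji : j ≠ l a0 := by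
              intro h
              rw [h, Finsupp.single_eq_same, Finsupp.add_apply,
                Finsupp.single_eq_of_ne (Ne.symm hva), Finsupp.single_eq_of_ne (Ne.symm hvb)] at hj
              omega
            have hwv : w = X j * X (l a0) := by
              apply mul_left_cancel₀ (X_ne_zero (l a0))
              rw [hwe]; ring
            have hwu : w ∈ Set.range u := by
              rcases hw with h | ⟨c, hcw⟩
              · exact h
              · exact absurd (hwv ▸ hcw.symm : (X j * X (l a0) : MvPolynomial (Fin n) K) = _)
                  (XX_ne_sq hji)
            refine ⟨j, ?_, ?_⟩
            · simp only [Set.mem_setOf_eq]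
              rw [← hwe]
              exact Ideal.mul_mem_left _ _ (Ideal.subset_span (Or.inl hwu))
            · have h1 := Finsupp.le_def.mp hle j
              simp only [Finsupp.add_apply,
                Finsupp.single_eq_of_ne hji] at h1 hj
              omega
      · -- si comes from an earlier square
        have hne : l c ≠ l a0 := fun h => (ne_of_lt hc) (hlinj h)
        obtain ⟨j, hj, w, hw, hwe⟩ := hpoly (X (l c) ^ 2) (Or.inr ⟨c, rfl⟩)
          (X (l a0) ^ 2) (Or.inr ⟨a0, rfl⟩) (l c) (by
            rw [Xsq_eq_mono, Xsq_eq_mono, degOf_mono_one, degOf_mono_one]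
            simp [Finsupp.single_apply, hne.symm])
        rw [Xsq_eq_mono, Xsq_eq_mono, degOf_mono_one, degOf_mono_one] at hj
        have hjla : j = l a0 := by
          by_contra h
          rw [Finsupp.single_eq_of_ne h] at hj
          omega
        subst hjla
        have hwv : w = X (l a0) * X (l c) := by
          apply mul_left_cancel₀ (X_ne_zero (l c))
          rw [hwe]; ring
        have hwu : w ∈ Set.range u := by
          rcases hw with h | ⟨c', hcw⟩
          · exact h
          · exact absurd (hwv ▸ hcw.symm : (X (l a0) * X (l c) : MvPolynomial (Fin n) K) = _)
              (XX_ne_sq hne.symm)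
        refine ⟨l c, ?_, ?_⟩
        · simp only [Set.mem_setOf_eq]
          have he : X (l c) * X (l a0) ^ 2 = X (l a0) * w := by rw [hwv]; ring
          rw [he]
          exact Ideal.mul_mem_left _ _ (Ideal.subset_span (Or.inl hwu))
        · have h1 := Finsupp.le_def.mp hle (l c)
          simp only [Finsupp.add_apply, Finsupp.single_eq_same,
            Finsupp.single_eq_of_ne hne] at h1
          omega
    · rw [Ideal.span_le]
      rintro _ ⟨j, hj, rfl⟩
      rw [SetLike.mem_coe, Ideal.mem_colon_span_singleton]
      exact hj
  refine ⟨part1, ?_⟩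
  have hvD : ∀ idx : Fin (m + t),
      Fin.append u (fun c : Fin t => (X (l c) : MvPolynomial (Fin n) K) ^ 2) idx
        = monomial (Fin.append (fun k => Finsupp.single (va k) 1 + Finsupp.single (vb k) 1)
            (fun c => Finsupp.single (l c) 2) idx) (1:K) := by
    intro idx
    induction idx using Fin.addCases with
    | left k => rw [Fin.append_left, Fin.append_left, hud]
    | right c => rw [Fin.append_right, Fin.append_right, Xsq_eq_mono]
  have hsum : ∀ idx : Fin (m + t),
      ∑ j, Fin.append (fun k => Finsupp.single (va k) 1 + Finsupp.single (vb k) 1)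
        (fun c => Finsupp.single (l c) 2) idx j = 2 := by
    intro idx
    induction idx using Fin.addCases with
    | left k =>
      rw [Fin.append_left]
      simp [Finsupp.add_apply, Finsupp.single_apply, Finset.sum_add_distrib]
    | right c =>
      rw [Fin.append_right]
      simp [Finsupp.single_apply]
  have hvinj : Function.Injective
      (Fin.append u (fun c : Fin t => (X (l c) : MvPolynomial (Fin n) K) ^ 2)) := by
    intro x y
    induction x using Fin.addCases with
    | left k =>
      induction y using Fin.addCases with
      | left k' =>
        intro hxy
        rw [Fin.append_left, Fin.append_left] at hxy
        exact congrArg _ (huinj hxy)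
      | right c =>
        intro hxy
        rw [Fin.append_left, Fin.append_right, hueq] at hxy
        exact absurd hxy (XX_ne_sq (hvab k))
    | right c =>
      induction y using Fin.addCases with
      | left k' =>
        intro hxy
        rw [Fin.append_right, Fin.append_left, hueq] at hxy
        exact absurd hxy.symm (XX_ne_sq (hvab k'))
      | right c' =>
        intro hxy
        rw [Fin.append_right, Fin.append_right, Xsq_eq_mono, Xsq_eq_mono] at hxy
        have h2 := DFunLike.congr_fun (monomial_left_injective one_ne_zero hxy) (l c)
        rw [Finsupp.single_eq_same] at h2
        have hcc : l c = l c' := by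
          by_contra h
          rw [Finsupp.single_eq_of_ne h] at h2
          omega
        exact congrArg _ (hlinj hcc)
  have hrange : Set.range (Fin.append u (fun c : Fin t => (X (l c) : MvPolynomial (Fin n) K) ^ 2))
      = Set.range u ∪ Set.range (fun c : Fin t => (X (l c) : MvPolynomial (Fin n) K) ^ 2) := by
    ext p
    constructor
    · rintro ⟨idx, rfl⟩
      induction idx using Fin.addCases with
      | left k =>
        exact Or.inl ⟨k,
          (Fin.append_left u (fun c : Fin t => (X (l c) : MvPolynomial (Fin n) K) ^ 2) k).symm⟩
      | right c =>
        exact Or.inr ⟨c,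
          (Fin.append_right u (fun c : Fin t => (X (l c) : MvPolynomial (Fin n) K) ^ 2) c).symm⟩
    · rintro (⟨k, rfl⟩ | ⟨c, rfl⟩)
      · exact ⟨Fin.castAdd t k,
          Fin.append_left u (fun c : Fin t => (X (l c) : MvPolynomial (Fin n) K) ^ 2) k⟩
      · exact ⟨Fin.natAdd m c,
          Fin.append_right u (fun c : Fin t => (X (l c) : MvPolynomial (Fin n) K) ^ 2) c⟩
  refine ⟨m + t, Fin.append u (fun c : Fin t => X (l c) ^ 2), ?_, ?_, ?_, ?_⟩
  · intro idx
    exact ⟨_, hvD idx⟩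
  · intro x y hne hdvd
    rw [hvD x, hvD y, monomial_dvd_monomial] at hdvd
    rcases hdvd.1 with h0 | hle2
    · exact one_ne_zero h0
    · have heq := finsupp_eq_of_le_sum hle2 ((hsum x).trans (hsum y).symm)
      exact hne (hvinj (by rw [hvD x, hvD y, heq]))
  · rw [hrange]
  · intro idx
    induction idx using Fin.addCases with
    | left k =>
      have himg : Fin.append u (fun c : Fin t => (X (l c) : MvPolynomial (Fin n) K) ^ 2) ''
          {j | j < Fin.castAdd t k} = u '' {j | j < k} := by
        ext p
        constructor
        · rintro ⟨j, hj, rfl⟩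
          have hjk : (j : ℕ) < (k : ℕ) := hj
          have hjm : (j : ℕ) < m := hjk.trans k.isLt
          refine ⟨⟨(j : ℕ), hjm⟩, hjk, ?_⟩
          have hje : j = Fin.castAdd t ⟨(j : ℕ), hjm⟩ := Fin.ext rfl
          conv_rhs => rw [hje]
          rw [Fin.append_left]
        · rintro ⟨j0, hj0, rfl⟩
          exact ⟨Fin.castAdd t j0, hj0, Fin.append_left _ _ j0⟩
      rw [Fin.append_left, himg]
      exact hadm k
    | right c =>
      have himg : Fin.append u (fun c' : Fin t => (X (l c') : MvPolynomial (Fin n) K) ^ 2) ''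
          {j | j < Fin.natAdd m c}
          = Set.range u ∪ (fun b : Fin t => (X (l b) : MvPolynomial (Fin n) K) ^ 2) ''
            {b | b < c} := by
        ext p
        constructor
        · rintro ⟨j, hj, rfl⟩
          have hjv : (j : ℕ) < m + (c : ℕ) := hj
          by_cases hjm : (j : ℕ) < m
          · refine Or.inl ⟨⟨(j : ℕ), hjm⟩, ?_⟩
            have hje : j = Fin.castAdd t ⟨(j : ℕ), hjm⟩ := Fin.ext rfl
            conv_rhs => rw [hje]
            rw [Fin.append_left]
          · have hct := c.isLt
            have hjm2 : (j : ℕ) - m < t := by omega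
            refine Or.inr ⟨⟨(j : ℕ) - m, hjm2⟩, ?_, ?_⟩
            · show (j : ℕ) - m < (c : ℕ)
              omega
            · have hje : j = Fin.natAdd m ⟨(j : ℕ) - m, hjm2⟩ :=
                Fin.ext (show (j : ℕ) = m + ((j : ℕ) - m) by omega)
              conv_rhs => rw [hje]
              rw [Fin.append_right]
        · rintro (⟨k, rfl⟩ | ⟨b, hb, rfl⟩)
          · refine ⟨Fin.castAdd t k, ?_, Fin.append_left _ _ k⟩
            show (k : ℕ) < m + (c : ℕ)
            have := k.isLt
            omega
          · refine ⟨Fin.natAdd m b, ?_, Fin.append_right _ _ b⟩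
            show m + (b : ℕ) < m + (c : ℕ)
            have hb' : (b : ℕ) < (c : ℕ) := hb
            omega
      rw [Fin.append_right, himg]
      exact part1 c
end

section
/- Let I ⊆ K[x_1,…,x_n] be a polymatroidal ideal generated in degree 2, let ℓ ∈ [n] be such that x_ℓ² ∈ G(I), and let i ∈ [n], i ≠ ℓ, be such that x_i divides some element of G(I). Then x_i x_ℓ ∈ G(I). Consequently, if every variable divides some minimal generator of I, then with respect to any admissible order of I in which x_ℓ² is listed last, set(x_ℓ²) = [n] \ {ℓ}. -/
open MvPolynomial

-- auxiliary: a finsupp with sum 2 and a i ≠ 0 decomposes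
lemma aux_sum_two {n : ℕ} (a : Fin n →₀ ℕ) (i : Fin n) (hi : a i ≠ 0)
    (hsum : (a.sum fun _ e => e) = 2) :
    ∃ k : Fin n, a = Finsupp.single i 1 + Finsupp.single k 1 := by
  have hcard : Multiset.card (Finsupp.toMultiset a) = 2 := by
    rw [Finsupp.card_toMultiset]; exact hsum
  obtain ⟨x, y, hxy⟩ := Multiset.card_eq_two.mp hcard
  have hmem : i ∈ Finsupp.toMultiset a := by
    rw [Finsupp.mem_toMultiset]; exact Finsupp.mem_support_iff.mpr hi
  rw [hxy] at hmem
  have key : ∀ k : Fin n, Finsupp.toMultiset (Finsupp.single i 1 + Finsupp.single k 1)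
      = {i, k} := by
    intro k
    rw [map_add, Finsupp.toMultiset_single, Finsupp.toMultiset_single]
    simp [Multiset.insert_eq_cons]
  have inj : ∀ f g : Fin n →₀ ℕ, Finsupp.toMultiset f = Finsupp.toMultiset g → f = g := by
    intro f g h
    rw [← Finsupp.toMultiset_toFinsupp f, ← Finsupp.toMultiset_toFinsupp g, h]
  rcases Multiset.mem_cons.mp hmem with h | h
  · refine ⟨y, inj _ _ ?_⟩
    rw [key, hxy, h]
  · have h' : i = y := by simpa using h
    refine ⟨x, inj _ _ ?_⟩
    rw [key, hxy, h']
    apply Multiset.cons_swap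

lemma aux_key {K : Type*} [Field K] {n : ℕ} (Gens : Set (MvPolynomial (Fin n) K))
    (hgens : ∀ w ∈ Gens, IsMonomialElt w ∧ w.totalDegree = 2)
    (hpoly : ExchangeProperty Gens)
    (l : Fin n) (hl : MvPolynomial.X l ^ 2 ∈ Gens)
    (i : Fin n) (hil : i ≠ l)
    (hdiv : ∃ w ∈ Gens, MvPolynomial.X i ∣ w) :
    MvPolynomial.X i * MvPolynomial.X l ∈ Gens := by
  obtain ⟨w, hw, hdvd⟩ := hdiv
  obtain ⟨⟨a, rfl⟩, hdeg⟩ := hgens w hw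
  have h1 : (1 : K) ≠ 0 := one_ne_zero
  have hai : a i ≠ 0 := by
    rcases (X_dvd_monomial.mp hdvd) with h | h
    · exact absurd h h1
    · exact h
  have hsum : (a.sum fun _ e => e) = 2 := by
    rwa [totalDegree_monomial _ h1] at hdeg
  obtain ⟨k, rfl⟩ := aux_sum_two a i hai hsum
  have hw' : (monomial (Finsupp.single i 1 + Finsupp.single k 1)) (1 : K)
      = MvPolynomial.X i * MvPolynomial.X k := by
    simp [X, monomial_mul]
  rw [hw'] at hw
  by_cases hkl : k = l
  · rwa [hkl] at hw
  -- apply exchange with u = X i * X k, v = X l ^ 2, at variable k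
  have hXl2 : (MvPolynomial.X l ^ 2 : MvPolynomial (Fin n) K)
      = monomial (Finsupp.single l 2) 1 := X_pow_eq_monomial
  have hdegk : MvPolynomial.degreeOf k ((MvPolynomial.X l : MvPolynomial (Fin n) K) ^ 2) <
      MvPolynomial.degreeOf k (MvPolynomial.X i * MvPolynomial.X k : MvPolynomial (Fin n) K) := by
    rw [hXl2, ← hw', degreeOf_monomial_eq _ _ h1, degreeOf_monomial_eq _ _ h1]
    rw [Finsupp.add_apply, Finsupp.single_apply, Finsupp.single_apply, Finsupp.single_apply,
      if_neg (fun h : l = k => hkl h.symm), if_pos (rfl : k = k)]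
    omega
  obtain ⟨j, hj, w', hw'mem, heq⟩ := hpoly _ hw _ hl k hdegk
  have hjl : j = l := by
    by_contra hne
    have : MvPolynomial.degreeOf j ((MvPolynomial.X l : MvPolynomial (Fin n) K) ^ 2) = 0 := by
      rw [hXl2, degreeOf_monomial_eq _ _ h1, Finsupp.single_apply]
      simp [Ne.symm hne]
    omega
  rw [hjl] at heq
  have hXk : (MvPolynomial.X k : MvPolynomial (Fin n) K) ≠ 0 := X_ne_zero k
  have : w' = MvPolynomial.X i * MvPolynomial.X l := by
    apply mul_left_cancel₀ hXk
    rw [heq]; ring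
  rwa [this] at hw'mem

/-- **Step in the proof of Theorem 4.6 (Ficarra–Herzog).**  Let `I` be a polymatroidal
ideal generated in degree `2`, with minimal monomial generating set `Gens`, let
`x_ℓ² ∈ G(I)` and let `i ≠ ℓ` be such that `x_i` divides some element of `G(I)`.  Then
`x_i x_ℓ ∈ G(I)`.  Consequently, if every variable divides some minimal generator, then
with respect to any admissible order of `I` in which `x_ℓ²` is listed last one has
`set(x_ℓ²) = [n] \ {ℓ}`, i.e.
`{ j : x_j ∈ (G(I) \ {x_ℓ²}) : x_ℓ² } = { j : j ≠ ℓ }`. -/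
theorem squarefree_times_last_variable_mem
    {K : Type*} [Field K] {n : ℕ} (Gens : Set (MvPolynomial (Fin n) K))
    (hgens : ∀ w ∈ Gens, IsMonomialElt w ∧ w.totalDegree = 2)
    (hpoly : ExchangeProperty Gens)
    (l : Fin n) (hl : MvPolynomial.X l ^ 2 ∈ Gens)
    (i : Fin n) (hil : i ≠ l)
    (hdiv : ∃ w ∈ Gens, MvPolynomial.X i ∣ w) :
    MvPolynomial.X i * MvPolynomial.X l ∈ Gens ∧
    ((∀ j : Fin n, ∃ w ∈ Gens, MvPolynomial.X j ∣ w) →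
      {j : Fin n | MvPolynomial.X j ∈
          (Ideal.span (Gens \ {MvPolynomial.X l ^ 2})).colon
            ((Ideal.span {MvPolynomial.X l ^ 2} : Ideal (MvPolynomial (Fin n) K)) :
              Set (MvPolynomial (Fin n) K))} =
        {j : Fin n | j ≠ l}) := by
  have h1 : (1 : K) ≠ 0 := one_ne_zero
  refine ⟨aux_key Gens hgens hpoly l hl i hil hdiv, fun hall => ?_⟩
  ext j
  simp only [Set.mem_setOf_eq, Ideal.mem_colon_span_singleton]
  constructor
  · intro hj
    rintro rfl
    -- X j * X j ^ 2 = X j ^ 3 ∈ span (Gens \ {X j ^ 2}) : contradiction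
    set S : Set (Fin n →₀ ℕ) :=
      {a | (monomial a (1:K)) ∈ Gens ∧ (monomial a (1:K)) ≠ MvPolynomial.X j ^ 2} with hS
    have himg : Gens \ {MvPolynomial.X j ^ 2} = (fun a => monomial a (1:K)) '' S := by
      ext w
      constructor
      · rintro ⟨hwG, hwne⟩
        obtain ⟨⟨a, rfl⟩, -⟩ := hgens w hwG
        exact ⟨a, ⟨hwG, hwne⟩, rfl⟩
      · rintro ⟨a, ⟨haG, hane⟩, rfl⟩
        exact ⟨haG, hane⟩
    rw [himg] at hj
    have hx3 : (MvPolynomial.X j * MvPolynomial.X j ^ 2 : MvPolynomial (Fin n) K)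
        = monomial (Finsupp.single j 3) 1 := by
      rw [X_pow_eq_monomial, X, monomial_mul, mul_one]
      congr 1
      rw [← Finsupp.single_add]
    rw [hx3] at hj
    have := mem_ideal_span_monomial_image.mp hj (Finsupp.single j 3) (by
      rw [mem_support_iff, coeff_monomial]; simp)
    obtain ⟨s, ⟨hsG, hsne⟩, hle⟩ := this
    -- s ≤ single j 3 forces s = single j (s j); total degree 2 forces s j = 2
    have hs_supp : ∀ m : Fin n, m ≠ j → s m = 0 := by
      intro m hm
      have h2 := hle m
      rw [Finsupp.single_apply, if_neg (fun h => hm h.symm)] at h2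
      exact Nat.le_zero.mp h2
    have hs_eq : s = Finsupp.single j (s j) := by
      ext m
      by_cases hm : m = j
      · subst hm; simp
      · rw [hs_supp m hm, Finsupp.single_apply]; simp [Ne.symm hm]
    have hdeg2 : (s.sum fun _ e => e) = 2 := by
      have := (hgens _ hsG).2
      rwa [totalDegree_monomial _ h1] at this
    have hsj : s j = 2 := by
      rw [hs_eq] at hdeg2
      simpa using hdeg2
    apply hsne
    rw [hs_eq, hsj, ← X_pow_eq_monomial]
  · intro hj
    have hmem : MvPolynomial.X j * MvPolynomial.X l ∈ Gens :=
      aux_key Gens hgens hpoly l hl j hj (hall j)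
    have hne : (MvPolynomial.X j * MvPolynomial.X l : MvPolynomial (Fin n) K) ≠ MvPolynomial.X l ^ 2 := by
      intro h
      have : ((MvPolynomial.X j * MvPolynomial.X l : MvPolynomial (Fin n) K)).coeff
          (Finsupp.single j 1 + Finsupp.single l 1) =
          ((MvPolynomial.X l ^ 2 : MvPolynomial (Fin n) K)).coeff
          (Finsupp.single j 1 + Finsupp.single l 1) := by rw [h]
      rw [X_pow_eq_monomial, coeff_monomial] at this
      have hXX : (MvPolynomial.X j * MvPolynomial.X l : MvPolynomial (Fin n) K)
          = monomial (Finsupp.single j 1 + Finsupp.single l 1) 1 := by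
        simp [X, monomial_mul]
      rw [hXX, coeff_monomial, if_pos rfl] at this
      have hne2 : Finsupp.single l 2 ≠ Finsupp.single j 1 + Finsupp.single l 1 := by
        intro h2
        have := DFunLike.congr_fun h2 j
        simp [Finsupp.single_apply, hj, Ne.symm hj] at this
      rw [if_neg hne2] at this
      exact h1 this
    have : MvPolynomial.X j * MvPolynomial.X l ∈
        Ideal.span (Gens \ {MvPolynomial.X l ^ 2}) :=
      Ideal.subset_span ⟨hmem, hne⟩
    have h3 : (MvPolynomial.X j * MvPolynomial.X l ^ 2 : MvPolynomial (Fin n) K)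
        = (MvPolynomial.X j * MvPolynomial.X l) * MvPolynomial.X l := by ring
    rw [h3]
    exact Ideal.mul_mem_right _ _ this
end

section
/- Let Γ_1 be a chordal graph on [n] = {1,…,n} such that 1,…,n is a perfect elimination order of Γ_1, and let Γ_2 be a chordal graph on {n+1,…,n+m} such that n+1,…,n+m is a perfect elimination order of Γ_2. Let Γ be the disjoint union of Γ_1 and Γ_2 and set G = Γ^c (so that 1,…,n+m is a perfect elimination order of G^c = Γ). Let G_1 = Γ_1^c (on [n]), G_2 = Γ_2^c (on {n+1,…,n+m}), and let B be the complete bipartite graph on [n+m] with parts [n] and {n+1,…,n+m}. Then for every k ≥ 0, in K[x_1,…,x_{n+m}] one has the equality of ideals HS_k(I(G)) = HS_k(I(B)) + HS_k(I(G_1))·K[x_1,…,x_{n+m}] + HS_k(I(G_2))·K[x_1,…,x_{n+m}]. -/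
open MvPolynomial

/-- The natural ordering `1, 2, …, n` of the vertices is a perfect elimination order of
`H`: for each vertex, its neighbourhood among the later vertices is a clique. -/
def natPEO {n : ℕ} (H : SimpleGraph (Fin n)) : Prop :=
  ∀ i j k : Fin n, i < j → i < k → j ≠ k → H.Adj i j → H.Adj i k → H.Adj j k

/-- The reversed ordering `n, n-1, …, 1` of the vertices is a perfect elimination order of
`H`: for each vertex, its neighbourhood among the earlier-labelled vertices is a clique. -/
def revPEO {n : ℕ} (H : SimpleGraph (Fin n)) : Prop :=
  ∀ i j k : Fin n, j < i → k < i → j ≠ k → H.Adj i j → H.Adj i k → H.Adj j k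
/-- The generating monomials of the `k`-th homological shift ideal `HS_k(I(G))`:
all monomials `x_A x_B` with `A, B` nonempty, `max A < min B`, `|A ∪ B| = k + 2` and
`{max A, b} ∈ E(G)` for all `b ∈ B`. -/
def HSgens (K : Type*) [Field K] {n : ℕ} (G : SimpleGraph (Fin n)) (k : ℕ) :
    Set (MvPolynomial (Fin n) K) :=
  {w | ∃ A B : Finset (Fin n), A.Nonempty ∧ B.Nonempty ∧
    (∀ a ∈ A, ∀ b ∈ B, a < b) ∧ (A ∪ B).card = k + 2 ∧
    (∃ a0 ∈ A, (∀ a ∈ A, a ≤ a0) ∧ ∀ b ∈ B, G.Adj a0 b) ∧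
    w = (∏ i ∈ A, MvPolynomial.X i) * ∏ i ∈ B, MvPolynomial.X i}
/-- A graph is *chordal* if it has no induced cycle of length greater than three,
i.e. every cycle of length at least four has a chord. -/
def IsChordal {V : Type*} (G : SimpleGraph V) : Prop :=
  ∀ m : ℕ, 4 ≤ m → ∀ f : ZMod m → V, Function.Injective f →
    (∀ i, G.Adj (f i) (f (i + 1))) →
      ∃ i j : ZMod m, G.Adj (f i) (f j) ∧ i ≠ j ∧ i + 1 ≠ j ∧ j + 1 ≠ i
/-- The complete bipartite graph `K_{n,m}` on `Fin (n+m)`, with parts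
`{0,…,n-1}` (corresponding to `[n] = {1,…,n}`) and `{n,…,n+m-1}` (corresponding to
`{n+1,…,n+m}`). -/
def bipartiteGraph (n m : ℕ) : SimpleGraph (Fin (n + m)) where
  Adj i j := ((i : ℕ) < n ∧ n ≤ (j : ℕ)) ∨ ((j : ℕ) < n ∧ n ≤ (i : ℕ))
  symm := ⟨fun i j h => h.symm⟩
  loopless := ⟨fun i h => by rcases h with ⟨h1, h2⟩ | ⟨h1, h2⟩ <;> omega⟩
/-- The disjoint union of a graph `Γ₁` on `[n]` (encoded as `Fin n`, embedded in
`Fin (n+m)` via `Fin.castAdd`) and a graph `Γ₂` on `{n+1,…,n+m}` (encoded as `Fin m`,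
embedded via `Fin.natAdd`). -/
def disjUnionGraph {n m : ℕ} (Γ₁ : SimpleGraph (Fin n)) (Γ₂ : SimpleGraph (Fin m)) :
    SimpleGraph (Fin (n + m)) where
  Adj u v := (∃ a b : Fin n, Γ₁.Adj a b ∧ u = Fin.castAdd m a ∧ v = Fin.castAdd m b) ∨
    (∃ a b : Fin m, Γ₂.Adj a b ∧ u = Fin.natAdd n a ∧ v = Fin.natAdd n b)
  symm := by
    constructor
    intro u v h
    rcases h with ⟨a, b, hab, hu, hv⟩ | ⟨a, b, hab, hu, hv⟩
    · exact Or.inl ⟨b, a, hab.symm, hv, hu⟩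
    · exact Or.inr ⟨b, a, hab.symm, hv, hu⟩
  loopless := by
    constructor
    intro u h
    rcases h with ⟨a, b, hab, hu, hv⟩ | ⟨a, b, hab, hu, hv⟩
    · refine hab.ne ?_
      have : (a : ℕ) = (b : ℕ) := by
        have := hu.symm.trans hv
        simpa [Fin.ext_iff] using this
      exact Fin.ext this
    · refine hab.ne ?_
      have : n + (a : ℕ) = n + (b : ℕ) := by
        have := hu.symm.trans hv
        simpa [Fin.ext_iff] using this
      exact Fin.ext (by omega)
section Aux

variable {K : Type*} [Field K]

/-- Pushing a generator forward along a strictly monotone, adjacency-preserving map. -/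
lemma HSgens_push {n N : ℕ} {f : Fin n → Fin N} (hf : StrictMono f)
    {G : SimpleGraph (Fin n)} {G' : SimpleGraph (Fin N)}
    (hadj : ∀ a b, G.Adj a b → G'.Adj (f a) (f b))
    {k : ℕ} {w : MvPolynomial (Fin n) K} (hw : w ∈ HSgens K G k) :
    MvPolynomial.rename (R := K) f w ∈ HSgens K G' k := by
  obtain ⟨A, B, hA, hB, hlt, hcard, ⟨a0, ha0A, hmax, hadj0⟩, rfl⟩ := hw
  refine ⟨A.image f, B.image f, hA.image f, hB.image f, ?_, ?_,
    ⟨f a0, Finset.mem_image_of_mem f ha0A, ?_, ?_⟩, ?_⟩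
  · rintro a ha b hb
    simp only [Finset.mem_image] at ha hb
    obtain ⟨a', ha', rfl⟩ := ha
    obtain ⟨b', hb', rfl⟩ := hb
    exact hf (hlt _ ha' _ hb')
  · rw [← Finset.image_union, Finset.card_image_of_injective _ hf.injective, hcard]
  · rintro a ha
    simp only [Finset.mem_image] at ha
    obtain ⟨a', ha', rfl⟩ := ha
    exact hf.monotone (hmax _ ha')
  · rintro b hb
    simp only [Finset.mem_image] at hb
    obtain ⟨b', hb', rfl⟩ := hb
    exact hadj _ _ (hadj0 _ hb')
  · rw [map_mul, map_prod, map_prod,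
      Finset.prod_image (fun a _ b _ h => hf.injective h),
      Finset.prod_image (fun a _ b _ h => hf.injective h)]
    simp [MvPolynomial.rename_X]

/-- Pulling a generator back along a strictly monotone, adjacency-reflecting map, when all
vertices involved lie in its range. -/
lemma HSgens_pull {n N : ℕ} {f : Fin n → Fin N} (hf : StrictMono f)
    {G : SimpleGraph (Fin n)} {G' : SimpleGraph (Fin N)}
    (hadj : ∀ a b, G'.Adj (f a) (f b) → G.Adj a b)
    {k : ℕ} {A B : Finset (Fin N)} (hA : A.Nonempty) (hB : B.Nonempty)
    (hlt : ∀ a ∈ A, ∀ b ∈ B, a < b) (hcard : (A ∪ B).card = k + 2)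
    (hex : ∃ a0 ∈ A, (∀ a ∈ A, a ≤ a0) ∧ ∀ b ∈ B, G'.Adj a0 b)
    (hrange : ∀ v ∈ A ∪ B, v ∈ Set.range f) :
    ((∏ i ∈ A, MvPolynomial.X i : MvPolynomial (Fin N) K) * ∏ i ∈ B, MvPolynomial.X i) ∈
      MvPolynomial.rename (R := K) f '' HSgens K G k := by
  classical
  set A' : Finset (Fin n) := A.preimage f hf.injective.injOn with hA'
  set B' : Finset (Fin n) := B.preimage f hf.injective.injOn with hB'
  have himA : A'.image f = A := by
    rw [hA', Finset.image_preimage]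
    exact Finset.filter_true_of_mem fun x hx => hrange x (Finset.mem_union_left _ hx)
  have himB : B'.image f = B := by
    rw [hB', Finset.image_preimage]
    exact Finset.filter_true_of_mem fun x hx => hrange x (Finset.mem_union_right _ hx)
  obtain ⟨a0, ha0A, hmax, hadj0⟩ := hex
  obtain ⟨a0', rfl⟩ := hrange a0 (Finset.mem_union_left _ ha0A)
  refine ⟨(∏ i ∈ A', MvPolynomial.X i) * ∏ i ∈ B', MvPolynomial.X i,
    ⟨A', B', ?_, ?_, ?_, ?_, ⟨a0', Finset.mem_preimage.2 ha0A, ?_, ?_⟩, rfl⟩, ?_⟩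
  · obtain ⟨a, haA⟩ := hA
    obtain ⟨a', rfl⟩ := hrange a (Finset.mem_union_left _ haA)
    exact ⟨a', Finset.mem_preimage.2 haA⟩
  · obtain ⟨b, hbB⟩ := hB
    obtain ⟨b', rfl⟩ := hrange b (Finset.mem_union_right _ hbB)
    exact ⟨b', Finset.mem_preimage.2 hbB⟩
  · intro a ha b hb
    exact hf.lt_iff_lt.1 (hlt _ (Finset.mem_preimage.1 ha) _ (Finset.mem_preimage.1 hb))
  · have : (A' ∪ B').image f = A ∪ B := by rw [Finset.image_union, himA, himB]
    rw [← hcard, ← this, Finset.card_image_of_injective _ hf.injective]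
  · intro a ha
    exact hf.le_iff_le.1 (hmax _ (Finset.mem_preimage.1 ha))
  · intro b hb
    exact hadj _ _ (hadj0 _ (Finset.mem_preimage.1 hb))
  · rw [map_mul, map_prod, map_prod]
    simp only [MvPolynomial.rename_X]
    conv_rhs => rw [← himA, ← himB]
    rw [Finset.prod_image (fun a _ b _ h => hf.injective h),
      Finset.prod_image (fun a _ b _ h => hf.injective h)]

end Aux

/-- **Step in the proof of Proposition 3.4 (Ficarra–Herzog).**  Let `Γ₁`, `Γ₂` be chordal
graphs on `[n]` and on `{n+1,…,n+m}` whose natural orders are perfect elimination orders,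
let `Γ` be their disjoint union and `G = Γᶜ`.  Let `G₁ = Γ₁ᶜ`, `G₂ = Γ₂ᶜ` and let `B` be
the complete bipartite graph with parts `[n]` and `{n+1,…,n+m}`.  Then for every `k ≥ 0`,
in `K[x_1,…,x_{n+m}]`,
`HS_k(I(G)) = HS_k(I(B)) + HS_k(I(G₁))·K[x_1,…,x_{n+m}] + HS_k(I(G₂))·K[x_1,…,x_{n+m}]`,
the last two ideals being extended along the inclusions given by renaming variables. -/
theorem HS_k_disjoint_union_decomposition
    {K : Type*} [Field K] {n m : ℕ}
    (Γ₁ : SimpleGraph (Fin n)) (Γ₂ : SimpleGraph (Fin m))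
    (hc1 : IsChordal Γ₁) (hc2 : IsChordal Γ₂)
    (hp1 : natPEO Γ₁) (hp2 : natPEO Γ₂) :
    ∀ k : ℕ,
      Ideal.span (HSgens K (disjUnionGraph Γ₁ Γ₂)ᶜ k) =
        Ideal.span (HSgens K (bipartiteGraph n m) k) +
        Ideal.map (MvPolynomial.rename (R := K) (Fin.castAdd m))
          (Ideal.span (HSgens K Γ₁ᶜ k)) +
        Ideal.map (MvPolynomial.rename (R := K) (Fin.natAdd n))
          (Ideal.span (HSgens K Γ₂ᶜ k)) := by
  classical
  intro k
  have hinj1 : Function.Injective (Fin.castAdd m : Fin n → Fin (n + m)) :=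
    (Fin.strictMono_castAdd m).injective
  have hinj2 : Function.Injective (Fin.natAdd n : Fin m → Fin (n + m)) :=
    (Fin.strictMono_natAdd n).injective
  -- adjacency facts
  have hcross : ∀ a b : Fin (n + m), (a : ℕ) < n → n ≤ (b : ℕ) →
      (disjUnionGraph Γ₁ Γ₂)ᶜ.Adj a b := by
    intro a b ha hb
    refine ⟨fun h => by simp [Fin.ext_iff] at h; omega, ?_⟩
    rintro (⟨x, y, -, rfl, rfl⟩ | ⟨x, y, -, rfl, rfl⟩)
    · simp only [Fin.coe_castAdd] at hb; omega
    · simp only [Fin.coe_natAdd] at ha; omega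
  have hadj1 : ∀ a b : Fin n, Γ₁ᶜ.Adj a b ↔
      (disjUnionGraph Γ₁ Γ₂)ᶜ.Adj (Fin.castAdd m a) (Fin.castAdd m b) := by
    intro a b
    simp only [SimpleGraph.compl_adj]
    constructor
    · rintro ⟨hne, hn⟩
      refine ⟨fun h => hne (hinj1 h), ?_⟩
      rintro (⟨x, y, h, hx, hy⟩ | ⟨x, y, h, hx, hy⟩)
      · exact hn (by rwa [hinj1 hx, hinj1 hy])
      · have : (a : ℕ) = n + (x : ℕ) := by
          have := congrArg (Fin.val) hx; simpa using this
        omega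
    · rintro ⟨hne, hn⟩
      exact ⟨fun h => hne (congrArg _ h), fun h => hn (Or.inl ⟨a, b, h, rfl, rfl⟩)⟩
  have hadj2 : ∀ a b : Fin m, Γ₂ᶜ.Adj a b ↔
      (disjUnionGraph Γ₁ Γ₂)ᶜ.Adj (Fin.natAdd n a) (Fin.natAdd n b) := by
    intro a b
    simp only [SimpleGraph.compl_adj]
    constructor
    · rintro ⟨hne, hn⟩
      refine ⟨fun h => hne (hinj2 h), ?_⟩
      rintro (⟨x, y, h, hx, hy⟩ | ⟨x, y, h, hx, hy⟩)
      · have : n + (a : ℕ) = (x : ℕ) := by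
          have := congrArg (Fin.val) hx; simpa using this
        have hx' : (x : ℕ) < n := x.isLt
        omega
      · exact hn (by rwa [hinj2 hx, hinj2 hy])
    · rintro ⟨hne, hn⟩
      exact ⟨fun h => hne (congrArg _ h), fun h => hn (Or.inr ⟨a, b, h, rfl, rfl⟩)⟩
  rw [Ideal.map_span, Ideal.map_span, Submodule.add_eq_sup, Submodule.add_eq_sup,
    ← Ideal.span_union, ← Ideal.span_union]
  congr 1
  ext w
  constructor
  · rintro ⟨A, B, hA, hB, hlt, hcard, hex, rfl⟩
    by_cases hall1 : ∀ v ∈ A ∪ B, (v : ℕ) < n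
    · -- all vertices in the first block
      refine Or.inl (Or.inr ?_)
      refine HSgens_pull (Fin.strictMono_castAdd m) (fun a b h => (hadj1 a b).2 h)
        hA hB hlt hcard hex ?_
      intro v hv
      exact ⟨⟨(v : ℕ), hall1 v hv⟩, Fin.ext rfl⟩
    · by_cases hall2 : ∀ v ∈ A ∪ B, n ≤ (v : ℕ)
      · -- all vertices in the second block
        refine Or.inr ?_
        refine HSgens_pull (Fin.strictMono_natAdd n) (fun a b h => (hadj2 a b).2 h)
          hA hB hlt hcard hex ?_
        intro v hv
        have h1 : n ≤ (v : ℕ) := hall2 v hv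
        have h2 : (v : ℕ) < n + m := v.isLt
        exact ⟨⟨(v : ℕ) - n, by omega⟩, Fin.ext (by simp only [Fin.coe_natAdd]; omega)⟩
      · -- mixed case: the monomial is a generator of HS_k(I(B))
        refine Or.inl (Or.inl ?_)
        push_neg at hall1 hall2
        obtain ⟨u, hu, hun⟩ := hall1
        obtain ⟨v, hv, hvn⟩ := hall2
        have hn : n ≤ (u : ℕ) := by omega
        set A' : Finset (Fin (n + m)) := (A ∪ B).filter (fun s => (s : ℕ) < n) with hA'
        set B' : Finset (Fin (n + m)) := (A ∪ B).filter (fun s => ¬((s : ℕ) < n)) with hB'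
        have hA'ne : A'.Nonempty := ⟨v, Finset.mem_filter.2 ⟨hv, hvn⟩⟩
        have hB'ne : B'.Nonempty := ⟨u, Finset.mem_filter.2 ⟨hu, by omega⟩⟩
        have hdisjAB : Disjoint A B := by
          rw [Finset.disjoint_left]
          intro x hxA hxB
          exact absurd (hlt x hxA x hxB) (lt_irrefl x)
        refine ⟨A', B', hA'ne, hB'ne, ?_, ?_, ?_, ?_⟩
        · intro a ha b hb
          have h1 := (Finset.mem_filter.1 ha).2
          have h2 := (Finset.mem_filter.1 hb).2
          exact Fin.lt_def.2 (by omega)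
        · rw [hA', hB', Finset.filter_union_filter_not_eq]
          exact hcard
        · refine ⟨A'.max' hA'ne, A'.max'_mem hA'ne, fun a ha => A'.le_max' a ha, ?_⟩
          intro b hb
          have h1 := (Finset.mem_filter.1 (A'.max'_mem hA'ne)).2
          have h2 := (Finset.mem_filter.1 hb).2
          exact Or.inl ⟨h1, by omega⟩
        · rw [← Finset.prod_union hdisjAB, hA', hB',
            Finset.prod_filter_mul_prod_filter_not (A ∪ B) (fun s => (s : ℕ) < n)]
  · rintro ((⟨A, B, hA, hB, hlt, hcard, ⟨a0, ha0A, hmax, hadj0⟩, rfl⟩ | h) | h)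
    · -- bipartite generators are generators of HS_k(I(G))
      refine ⟨A, B, hA, hB, hlt, hcard, ⟨a0, ha0A, hmax, ?_⟩, rfl⟩
      intro b hb
      rcases hadj0 b hb with ⟨h1, h2⟩ | ⟨h1, h2⟩
      · exact hcross a0 b h1 h2
      · have := hlt a0 ha0A b hb
        have := Fin.lt_def.1 this
        omega
    · obtain ⟨w', hw', rfl⟩ := h
      exact HSgens_push (Fin.strictMono_castAdd m) (fun a b h => (hadj1 a b).1 h) hw'
    · obtain ⟨w', hw', rfl⟩ := h
      exact HSgens_push (Fin.strictMono_natAdd n) (fun a b h => (hadj2 a b).1 h) hw'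
end
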